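/- Let E be a real Banach space and U ⊆ E a subset. Then U is open in the norm topology if and only if for every C^∞ curve c : ℝ → E the preimage c⁻¹(U) is open in ℝ. (Banach-space instance of the claim that the c^∞-topology, the final topology with respect to all smooth curves, coincides with the given topology on a Fréchet space.) -/

import Mathlib

open Metric Filter Set

/-- On a Banach space the `c^∞`-topology coincides with the norm topology: a set
is open iff its preimage under every smooth curve is open. -/
theorem isOpen_iff_smooth_preimage_open {E : Type*}
    [NormedAddCommGroup E] [NormedSpace ℝ E] [CompleteSpace E] (U : Set E) :
    IsOpen U ↔ ∀ c : ℝ → E, ContDiff ℝ (⊤ : ℕ∞) c → IsOpen (c ⁻¹' U) := by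
  constructor
  · intro hU c hc
    exact hU.preimage hc.continuous
  · intro H
    by_contra hU
    rw [isOpen_iff_mem_nhds] at hU
    push_neg at hU
    obtain ⟨x, hxU, hx⟩ := hU
    -- times
    set t : ℕ → ℝ := fun n => ((n : ℝ) + 1)⁻¹ with ht
    have tpos : ∀ n, 0 < t n := fun n => by positivity
    -- bumps
    have hlt : ∀ n : ℕ, ((3 : ℝ) * ((n:ℝ)+1) * ((n:ℝ)+2))⁻¹ < ((2 : ℝ) * ((n:ℝ)+1) * ((n:ℝ)+2))⁻¹ := by
      intro n
      apply inv_strictAnti₀ (by positivity)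
      nlinarith [Nat.cast_nonneg (α := ℝ) n]
    set φ : ∀ n : ℕ, ContDiffBump (t n) := fun n =>
      ⟨((3:ℝ) * ((n:ℝ)+1) * ((n:ℝ)+2))⁻¹, ((2:ℝ) * ((n:ℝ)+1) * ((n:ℝ)+2))⁻¹,
        by positivity, hlt n⟩ with hφ
    -- separation: for m ≠ n (or the point 0), φ m vanishes
    have hsep : ∀ m n : ℕ, m ≠ n → (φ m).rOut ≤ dist (t n) (t m) := by
      intro m n hmn
      have hM : (0:ℝ) ≤ (m:ℝ) := Nat.cast_nonneg m
      have hN : (0:ℝ) ≤ (n:ℝ) := Nat.cast_nonneg n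
      rcases lt_or_gt_of_ne hmn with h | h
      · -- m < n : t n < t m, dist ≥ t m - t n ≥ 1/((m+1)(m+2)) roughly
        have hmn' : (m:ℝ) + 1 ≤ (n:ℝ) := by exact_mod_cast Nat.succ_le_of_lt h
        have h1 : t n ≤ t m := by
          apply inv_anti₀ (by positivity)
          linarith
        rw [Real.dist_eq, abs_of_nonpos (by linarith)]
        show ((2:ℝ) * ((m:ℝ)+1) * ((m:ℝ)+2))⁻¹ ≤ -(t n - t m)
        have e1 : -(t n - t m) = ((n:ℝ) - m) / (((n:ℝ)+1) * ((m:ℝ)+1)) := by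
          simp only [ht]
          field_simp
          try ring
        rw [e1, inv_eq_one_div, div_le_div_iff₀ (by positivity) (by positivity)]
        have hmd : (0:ℝ) ≤ (m:ℝ) * ((n:ℝ) - (m:ℝ) - 1) :=
          mul_nonneg hM (by linarith)
        have key : (n:ℝ) + 1 ≤ 2 * ((n:ℝ) - m) * ((m:ℝ) + 2) := by nlinarith
        nlinarith [mul_le_mul_of_nonneg_right key (show (0:ℝ) ≤ (m:ℝ)+1 by linarith)]
      · -- n < m : t m < t n
        have hmn' : (n:ℝ) + 1 ≤ (m:ℝ) := by exact_mod_cast Nat.succ_le_of_lt h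
        have h1 : t m ≤ t n := by
          apply inv_anti₀ (by positivity)
          linarith
        rw [Real.dist_eq, abs_of_nonneg (by linarith)]
        show ((2:ℝ) * ((m:ℝ)+1) * ((m:ℝ)+2))⁻¹ ≤ t n - t m
        have e1 : t n - t m = ((m:ℝ) - n) / (((n:ℝ)+1) * ((m:ℝ)+1)) := by
          simp only [ht]
          field_simp
          try ring
        rw [e1, inv_eq_one_div, div_le_div_iff₀ (by positivity) (by positivity)]
        nlinarith [mul_nonneg (show (0:ℝ) ≤ (m:ℝ)-n-1+1 by linarith)
            (show (0:ℝ) ≤ 2*((m:ℝ)+1)*((m:ℝ)+2) by positivity),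
          mul_le_mul_of_nonneg_right (show (n:ℝ)+1 ≤ 2*((m:ℝ)+2) by linarith)
            (show (0:ℝ) ≤ (m:ℝ)+1 by linarith),
          mul_nonneg (show (0:ℝ) ≤ (m:ℝ)-n-1 by linarith)
            (show (0:ℝ) ≤ 2*((m:ℝ)+1)*((m:ℝ)+2) by positivity)]
    have hzero : ∀ m : ℕ, (φ m).rOut ≤ dist (0:ℝ) (t m) := by
      intro m
      have hM : (0:ℝ) ≤ (m:ℝ) := Nat.cast_nonneg m
      rw [Real.dist_eq, zero_sub, abs_neg, abs_of_pos (tpos m)]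
      show ((2:ℝ) * ((m:ℝ)+1) * ((m:ℝ)+2))⁻¹ ≤ t m
      apply inv_anti₀ (by positivity)
      nlinarith
    -- bounds on iterated derivatives of bumps
    have hbound : ∀ n k : ℕ, ∃ C : ℝ, ∀ s : ℝ, ‖iteratedFDeriv ℝ k (φ n) s‖ ≤ C := by
      intro n k
      exact ((φ n).hasCompactSupport.iteratedFDeriv k).exists_bound_of_continuous
        (((φ n).contDiff (n := (⊤:ℕ∞))).continuous_iteratedFDeriv
          (by exact_mod_cast le_top))
    choose M hM using hbound
    -- choose fast-shrinking radii
    set δ : ℕ → ℝ := fun n =>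
      ((1:ℝ)/2)^n / (1 + ∑ k ∈ Finset.range (n+1), max (M n k) 0) with hδ
    have hsum_nonneg : ∀ n, (0:ℝ) ≤ ∑ k ∈ Finset.range (n+1), max (M n k) 0 := by
      intro n
      exact Finset.sum_nonneg fun k _ => le_max_right _ _
    have hδpos : ∀ n, 0 < δ n := by
      intro n
      have := hsum_nonneg n
      positivity
    -- choose bad points
    have hbad : ∀ n : ℕ, ∃ y : E, y ∈ ball x (δ n) ∧ y ∉ U := by
      intro n
      by_contra hc
      push_neg at hc
      exact hx (mem_of_superset (ball_mem_nhds x (hδpos n)) hc)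
    choose y hy hyU using hbad
    -- the curve
    set f : ℕ → ℝ → E := fun n s => φ n s • (y n - x) with hf
    have hfc : ∀ n, ContDiff ℝ ((⊤:ℕ∞) : WithTop ℕ∞) (f n) := fun n =>
      ((φ n).contDiff).smul contDiff_const
    -- derivative bounds for f n
    have hfb : ∀ n k : ℕ, ∀ s : ℝ, ‖iteratedFDeriv ℝ k (f n) s‖ ≤ M n k * δ n := by
      intro n k s
      have : f n = (ContinuousLinearMap.smulRight (ContinuousLinearMap.id ℝ ℝ) (y n - x)) ∘ (φ n) := by
        funext s
        simp [hf]
      rw [this, ContinuousLinearMap.iteratedFDeriv_comp_left _ ((φ n).contDiff (n := (⊤:ℕ∞))).contDiffAt (x := s)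
        (by exact_mod_cast le_top : (k : WithTop ℕ∞) ≤ ((⊤:ℕ∞) : WithTop ℕ∞))]
      calc ‖(ContinuousLinearMap.smulRight (ContinuousLinearMap.id ℝ ℝ) (y n - x)).compContinuousMultilinearMap
            (iteratedFDeriv ℝ k (φ n) s)‖
          ≤ ‖ContinuousLinearMap.smulRight (ContinuousLinearMap.id ℝ ℝ) (y n - x)‖ *
            ‖iteratedFDeriv ℝ k (φ n) s‖ :=
            ContinuousLinearMap.norm_compContinuousMultilinearMap_le _ _
        _ ≤ ‖y n - x‖ * ‖iteratedFDeriv ℝ k (φ n) s‖ := by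
            apply mul_le_mul_of_nonneg_right _ (norm_nonneg _)
            rw [ContinuousLinearMap.norm_smulRight_apply, ContinuousLinearMap.norm_id]
            simp
        _ ≤ δ n * M n k := by
            apply mul_le_mul
            · exact (mem_ball_iff_norm.mp (hy n)).le
            · exact hM n k s
            · exact norm_nonneg _
            · exact (hδpos n).le
        _ = M n k * δ n := mul_comm _ _
    have hfb2 : ∀ k n : ℕ, k ≤ n → ∀ s : ℝ, ‖iteratedFDeriv ℝ k (f n) s‖ ≤ ((1:ℝ)/2)^n := by
      intro k n hkn s
      refine (hfb n k s).trans ?_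
      have h1 : M n k ≤ 1 + ∑ j ∈ Finset.range (n+1), max (M n j) 0 := by
        calc M n k ≤ max (M n k) 0 := le_max_left _ _
          _ ≤ ∑ j ∈ Finset.range (n+1), max (M n j) 0 :=
            Finset.single_le_sum (f := fun j => max (M n j) 0)
              (fun j _ => le_max_right _ _) (Finset.mem_range.mpr (Nat.lt_succ_of_le hkn))
          _ ≤ 1 + _ := by linarith
      have hS := hsum_nonneg n
      calc M n k * δ n ≤ (1 + ∑ j ∈ Finset.range (n+1), max (M n j) 0) * δ n :=
            mul_le_mul_of_nonneg_right h1 (hδpos n).le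
        _ = ((1:ℝ)/2)^n := by
            rw [hδ]
            field_simp
    -- the sum is smooth
    set c : ℝ → E := fun s => x + ∑' n, f n s with hcdef
    have hc : ContDiff ℝ (⊤ : ℕ∞) c := by
      apply contDiff_const.add
      apply contDiff_tsum_of_eventually hfc (v := fun k n => ((1:ℝ)/2)^n)
      · intro k _
        exact summable_geometric_of_lt_one (by norm_num) (by norm_num)
      · intro k _
        have : {n : ℕ | k ≤ n} ∈ (cofinite : Filter ℕ) := by
          rw [Nat.cofinite_eq_atTop]
          exact eventually_ge_atTop k
        filter_upwards [this] with n hn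
        exact hfb2 k n hn
    -- values of c
    have hval : ∀ n : ℕ, c (t n) = y n := by
      intro n
      have h1 : ∑' m, f m (t n) = y n - x := by
        rw [tsum_eq_single n]
        · simp [hf, (φ n).one_of_mem_closedBall (Metric.mem_closedBall_self (φ n).rIn_pos.le)]
        · intro m hmn
          simp [hf, (φ m).zero_of_le_dist (hsep m n hmn)]
      simp [hcdef, h1]
    have hval0 : c 0 = x := by
      have h1 : ∑' m, f m (0:ℝ) = 0 := by
        have : ∀ m, f m (0:ℝ) = 0 := by
          intro m
          simp [hf, (φ m).zero_of_le_dist (hzero m)]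
        simp [this]
      simp [hcdef, h1]
    -- conclude
    have hopen := H c hc
    have h0 : (0:ℝ) ∈ c ⁻¹' U := by simp [Set.mem_preimage, hval0, hxU]
    obtain ⟨ε, hε, hball⟩ := Metric.isOpen_iff.mp hopen 0 h0
    obtain ⟨n, hn⟩ := exists_nat_one_div_lt hε
    have htn : t n ∈ ball (0:ℝ) ε := by
      rw [mem_ball, Real.dist_eq, sub_zero, abs_of_pos (tpos n)]
      calc t n = 1 / ((n:ℝ)+1) := by rw [ht]; rw [one_div]
        _ < ε := hn
    have := hball htn
    rw [Set.mem_preimage, hval n] at this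
    exact hyU n this
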